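/- Let (H, ⟨·,·⟩_H) be a vRKHS of functions from [0,T] to ℝ^N with kernel K such that (s,t) ↦ K(s,t) is uniformly continuous on [0,T]². Let c_1,…,c_P : [0,T] → ℝ^N and d_1,…,d_P : [0,T] → ℝ be continuous. Let x₀ ∈ ℝ^N with c_i(0)ᵀx₀ < d_i(0) for all i, and suppose there exist ε₁,…,ε_P > 0 and x^ε ∈ H with x^ε(0) = x₀ and c_i(t)ᵀx^ε(t) + ε_i ≤ d_i(t) for all t ∈ [0,T] and all i. Let g : ℝ^N → ℝ be continuous and suppose L(x) := g(x(T)) + ‖x‖²_H is μ-strongly convex for some μ > 0. For a finite family of points t_m ∈ [0,T] and radii δ_m > 0 (m = 1,…,N₀) covering [0,T] (i.e. [0,T] ⊆ ∪_m [t_m−δ_m, t_m+δ_m]), define V₀ := {x ∈ H : c_i(t)ᵀx(t) ≤ d_i(t) ∀t,∀i} and V_{δ,fin} := {x ∈ H : η_i(δ_m,t_m)‖x‖_H + c_i(t_m)ᵀx(t_m) ≤ d_i(δ_m,t_m) ∀m,∀i}, where η_i(δ,t) := sup_{s∈[t−δ,t+δ]∩[0,T]} ‖K(·,t)c_i(t)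 − K(·,s)c_i(s)‖_H and d_i(δ_m,t_m) := inf_{s∈[t_m−δ_m,t_m+δ_m]∩[0,T]} d_i(s). Then for every λ > 0 there exists δ̄ > 0 such that for every such finite covering with max_m δ_m ≤ δ̄: the minimizer x̄⁰ of L over V₀ ∩ {x ∈ H : x(0) = x₀} and the minimizer x̄^{δ,fin} of L over V_{δ,fin} ∩ {x ∈ H : x(0) = x₀} exist, are unique, and satisfy (1/γ_K)·sup_{t∈[0,T]} ‖x̄^{δ,fin}(t) − x̄⁰(t)‖ ≤ ‖x̄^{δ,fin} − x̄⁰‖_H ≤ λ, where γ_K := sup_{t∈[0,T], ‖p‖≤1} (pᵀK(t,t)p)^{1/2}. -/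

import Mathlib

open scoped RealInnerProductSpace

set_option linter.unusedSectionVars false
set_option maxHeartbeats 1000000

section aux
variable {H : Type*} [NormedAddCommGroup H] [InnerProductSpace ℝ H] [CompleteSpace H]

lemma norm_combo_sq' (x y : H) (a : ℝ) :
    ‖a • x + (1 - a) • y‖ ^ 2
      = a * ‖x‖ ^ 2 + (1 - a) * ‖y‖ ^ 2 - a * (1 - a) * ‖x - y‖ ^ 2 := by
  have h1 := norm_add_sq_real (a • x) ((1 - a) • y)
  have h2 := norm_sub_sq_real x y
  have h3 : ⟪a • x, (1 - a) • y⟫ = a * (1 - a) * ⟪x, y⟫ := by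
    rw [real_inner_smul_left, real_inner_smul_right]; ring
  have h4 : ‖a • x‖ ^ 2 = a ^ 2 * ‖x‖ ^ 2 := by
    rw [norm_smul, mul_pow, Real.norm_eq_abs, sq_abs]
  have h5 : ‖(1 - a) • y‖ ^ 2 = (1 - a) ^ 2 * ‖y‖ ^ 2 := by
    rw [norm_smul, mul_pow, Real.norm_eq_abs, sq_abs]
  nlinarith [h1, h2, h3, h4, h5]

lemma sc_bddBelow' (L : H → ℝ) (hLc : Continuous L) (μ : ℝ) (hμ : 0 < μ)
    (hsc : ∀ x₁ x₂ : H, ∀ α : ℝ, α ∈ Set.Icc (0:ℝ) 1 →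
      L (α • x₁ + (1 - α) • x₂) + α * (1 - α) * (μ / 2) * ‖x₁ - x₂‖ ^ 2 ≤
        α * L x₁ + (1 - α) * L x₂) :
    ∃ C : ℝ, ∀ y, C ≤ L y := by
  obtain ⟨ψ, hψ⟩ : ∃ ψ : H → ℝ, ψ = fun y => L y - μ / 2 * ‖y‖ ^ 2 := ⟨_, rfl⟩
  have hψconv : ∀ x y : H, ∀ a : ℝ, a ∈ Set.Icc (0:ℝ) 1 →
      ψ (a • x + (1 - a) • y) ≤ a * ψ x + (1 - a) * ψ y := by
    intro x y a ha
    have h1 := hsc x y a ha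
    have h2 := norm_combo_sq' x y a
    simp only [hψ]
    nlinarith [h1, h2]
  have hψc : Continuous ψ := by
    rw [hψ]; exact hLc.sub (continuous_const.mul (continuous_norm.pow 2))
  obtain ⟨r, hr, hball⟩ :=
    Metric.continuousAt_iff.mp (hψc.continuousAt (x := (0 : H))) 1 one_pos
  have hlow : ∀ w : H, ‖w‖ < r → ψ 0 - 1 < ψ w := by
    intro w hw
    have h := hball (x := w) (by simpa [dist_eq_norm] using hw)
    rw [Real.dist_eq] at h
    have h' := abs_lt.mp h
    linarith [h'.1]
  refine ⟨ψ 0 - 1 - 2 / (μ * r ^ 2), ?_⟩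
  intro y
  have hLy : L y = ψ y + μ / 2 * ‖y‖ ^ 2 := by rw [hψ]; ring
  have hden : 0 < μ * r ^ 2 := mul_pos hμ (pow_pos hr 2)
  have hrpos : 0 < 2 / (μ * r ^ 2) := div_pos two_pos hden
  by_cases hy : ‖y‖ < r / 2
  · have := hlow y (by linarith)
    rw [hLy]
    nlinarith [this, mul_nonneg hμ.le (sq_nonneg ‖y‖), hrpos]
  · push_neg at hy
    have hynorm : (0:ℝ) < ‖y‖ := by linarith [div_pos hr two_pos]
    set t : ℝ := r / (2 * ‖y‖) with htdef
    have ht0 : 0 < t := div_pos hr (by linarith)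
    have ht1 : t ≤ 1 := by
      rw [htdef, div_le_one (by linarith)]; linarith
    have hty : ‖t • y‖ < r := by
      rw [norm_smul, Real.norm_eq_abs, abs_of_pos ht0, htdef]
      rw [div_mul_eq_mul_div]
      rw [div_lt_iff₀ (by linarith)]
      nlinarith
    have hconv := hψconv y 0 t ⟨ht0.le, ht1⟩
    simp only [smul_zero, add_zero] at hconv
    have hl := hlow (t • y) hty
    have h2 : t * ψ 0 - 1 ≤ t * ψ y := by linarith
    have hinv : 1 / t = 2 * ‖y‖ / r := by
      rw [htdef, one_div_div]
    have key : ψ 0 - 2 * ‖y‖ / r ≤ ψ y := by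
      rw [← hinv]
      have h2' : (-1:ℝ) ≤ t * (ψ y - ψ 0) := by nlinarith [h2]
      have h4 := (div_le_div_iff_of_pos_right ht0).mpr h2'
      rw [mul_div_cancel_left₀ _ (ne_of_gt ht0), neg_div] at h4
      linarith [h4]
    have hfin : ψ 0 - 2 / (μ * r ^ 2) ≤ ψ y + μ / 2 * ‖y‖ ^ 2 := by
      have hid : μ / 2 * ‖y‖ ^ 2 - 2 * ‖y‖ / r + 2 / (μ * r ^ 2)
          = (μ * ‖y‖ - 2 / r) ^ 2 / (2 * μ) := by
        field_simp
        ring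
      have hnn : 0 ≤ (μ * ‖y‖ - 2 / r) ^ 2 / (2 * μ) :=
        div_nonneg (sq_nonneg _) (by linarith)
      linarith [key, hid ▸ hnn]
    rw [hLy]
    linarith [hfin]

lemma sc_exists_min' (L : H → ℝ) (hLc : Continuous L) (μ : ℝ) (hμ : 0 < μ)
    (hsc : ∀ x₁ x₂ : H, ∀ α : ℝ, α ∈ Set.Icc (0:ℝ) 1 →
      L (α • x₁ + (1 - α) • x₂) + α * (1 - α) * (μ / 2) * ‖x₁ - x₂‖ ^ 2 ≤
        α * L x₁ + (1 - α) * L x₂)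
    (hbdd : ∃ C : ℝ, ∀ y, C ≤ L y)
    (S : Set H) (hScl : IsClosed S) (hSconv : Convex ℝ S) (hSne : S.Nonempty) :
    ∃ xbar ∈ S, (∀ y ∈ S, L xbar ≤ L y) ∧
      (∀ y ∈ S, μ / 4 * ‖y - xbar‖ ^ 2 ≤ L y - L xbar) := by
  obtain ⟨C, hC⟩ := hbdd
  have hne : (L '' S).Nonempty := hSne.image L
  have hb : BddBelow (L '' S) := ⟨C, by rintro a ⟨y, _, rfl⟩; exact hC y⟩
  set m : ℝ := sInf (L '' S) with hm
  have hmle : ∀ y ∈ S, m ≤ L y := fun y hy => csInf_le hb ⟨y, hy, rfl⟩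
  have hmid : ∀ u ∈ S, ∀ v ∈ S, μ / 8 * ‖u - v‖ ^ 2 ≤ (L u + L v) / 2 - m := by
    intro u hu v hv
    have hz : (1/2 : ℝ) • u + (1 - 1/2 : ℝ) • v ∈ S := by
      have := hSconv hu hv (by norm_num : (0:ℝ) ≤ 1/2)
        (by norm_num : (0:ℝ) ≤ 1 - 1/2) (by norm_num)
      exact this
    have h1 := hsc u v (1/2) (by norm_num)
    have h2 := hmle _ hz
    nlinarith [h1, h2]
  have hseq : ∀ n : ℕ, ∃ z ∈ S, L z < m + 1 / (n + 1) := by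
    intro n
    have hlt : m < m + 1 / (n + 1) := by
      have : (0:ℝ) < 1 / (n + 1) := by positivity
      linarith
    obtain ⟨a, ⟨z, hz, rfl⟩, hal⟩ := exists_lt_of_csInf_lt hne hlt
    exact ⟨z, hz, hal⟩
  choose x hxS hxL using hseq
  have hest : ∀ n k : ℕ, ‖x n - x k‖ ^ 2 ≤ 4 / μ * (1 / (n + 1) + 1 / (k + 1)) := by
    intro n k
    have h := hmid (x n) (hxS n) (x k) (hxS k)
    have h1 := hxL n
    have h2 := hxL k
    have h3 : μ / 8 * ‖x n - x k‖ ^ 2 ≤ (1 / (n + 1) + 1 / (k + 1)) / 2 := by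
      linarith
    have h4 : ‖x n - x k‖ ^ 2 = 8 / μ * (μ / 8 * ‖x n - x k‖ ^ 2) := by
      field_simp
    rw [h4]
    have h5 : (0:ℝ) ≤ 8 / μ := by positivity
    calc 8 / μ * (μ / 8 * ‖x n - x k‖ ^ 2) ≤ 8 / μ * ((1 / (n + 1) + 1 / (k + 1)) / 2) :=
          mul_le_mul_of_nonneg_left h3 h5
      _ = 4 / μ * (1 / (n + 1) + 1 / (k + 1)) := by ring
  have hcauchy : CauchySeq x := by
    rw [Metric.cauchySeq_iff']
    intro eps heps
    obtain ⟨Nn, hNn⟩ := exists_nat_gt (8 / (μ * eps ^ 2))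
    refine ⟨Nn, fun n hn => ?_⟩
    rw [dist_eq_norm]
    have h1 := hest n Nn
    have h2 : (1 : ℝ) / (n + 1) ≤ 1 / (Nn + 1) := by
      apply one_div_le_one_div_of_le (by positivity)
      have : (Nn : ℝ) ≤ n := Nat.cast_le.mpr hn
      linarith
    have h3 : ‖x n - x Nn‖ ^ 2 ≤ 8 / μ * (1 / (Nn + 1)) := by
      have := mul_le_mul_of_nonneg_left (add_le_add h2 (le_refl (1/((Nn:ℝ)+1))))
        (by positivity : (0:ℝ) ≤ 4 / μ)
      calc ‖x n - x Nn‖ ^ 2 ≤ 4 / μ * (1 / (n + 1) + 1 / (Nn + 1)) := h1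
        _ ≤ 4 / μ * (1 / (Nn + 1) + 1 / (Nn + 1)) := this
        _ = 8 / μ * (1 / (Nn + 1)) := by ring
    have h4 : 8 / μ * (1 / ((Nn:ℝ) + 1)) < eps ^ 2 := by
      rw [div_mul_eq_mul_div, mul_one_div, div_div]
      rw [div_lt_iff₀ (by positivity)]
      have h5 : 8 / (μ * eps ^ 2) * (μ * eps ^ 2) = 8 := by
        field_simp
      have h6 : (0:ℝ) < μ * eps ^ 2 := by positivity
      nlinarith [hNn, h6]
    have h7 : ‖x n - x Nn‖ ^ 2 < eps ^ 2 := lt_of_le_of_lt h3 h4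
    exact lt_of_pow_lt_pow_left₀ 2 heps.le h7
  obtain ⟨xbar, hlim⟩ := cauchySeq_tendsto_of_complete hcauchy
  have hxbarS : xbar ∈ S := hScl.mem_of_tendsto hlim (Filter.Eventually.of_forall hxS)
  have hLlim : Filter.Tendsto (fun n => L (x n)) Filter.atTop (nhds (L xbar)) :=
    (hLc.tendsto xbar).comp hlim
  have hLlim2 : Filter.Tendsto (fun n => L (x n)) Filter.atTop (nhds m) := by
    have hupper : Filter.Tendsto (fun n : ℕ => m + 1 / ((n:ℝ) + 1)) Filter.atTop (nhds m) := by
      have h : Filter.Tendsto (fun n : ℕ => 1 / ((n:ℝ) + 1)) Filter.atTop (nhds 0) :=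
        tendsto_one_div_add_atTop_nhds_zero_nat
      simpa using tendsto_const_nhds.add h
    exact tendsto_of_tendsto_of_tendsto_of_le_of_le (g := fun _ : ℕ => m)
      tendsto_const_nhds hupper (fun n => hmle _ (hxS n)) (fun n => (hxL n).le)
  have hLxbar : L xbar = m := tendsto_nhds_unique hLlim hLlim2
  refine ⟨xbar, hxbarS, fun y hy => by rw [hLxbar]; exact hmle y hy, ?_⟩
  intro y hy
  have h := hmid y hy xbar hxbarS
  rw [hLxbar] at *
  nlinarith [h, hmle y hy]

lemma exists_pos_forall_fin' : ∀ {n : ℕ} (δ : Fin n → ℝ), (∀ i, 0 < δ i) →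
    ∃ ρ : ℝ, 0 < ρ ∧ ∀ i, ρ ≤ δ i := by
  intro n
  induction n with
  | zero => exact fun δ _ => ⟨1, one_pos, fun i => i.elim0⟩
  | succ n ih =>
    intro δ hδ
    obtain ⟨ρ, hρ, hle⟩ := ih (fun j => δ j.succ) (fun j => hδ j.succ)
    refine ⟨min ρ (δ 0), lt_min hρ (hδ 0), fun i => ?_⟩
    refine Fin.cases (min_le_right _ _) (fun j => le_trans (min_le_left _ _) (hle j)) i

end aux


/-- **Main result: approximation by SOC constraints.** In a vRKHS `H` of
functions `[0,T] → ℝ^N` with uniformly continuous kernel, continuous constraints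
`cᵢ, dᵢ`, a strictly feasible trajectory `x^ε` through `x₀` (with slack `εᵢ > 0`),
continuous terminal cost `g` and `μ`-strongly convex objective `L x = g(x(T)) + ‖x‖²`:
for every `λ > 0` there is `δ̄ > 0` such that, for every finite covering of `[0,T]` by
intervals `[tₘ−δₘ, tₘ+δₘ]` with `δₘ ≤ δ̄`, the minimizers `x̄⁰` (affine constraints) and
`x̄^{δ,fin}` (SOC constraints) exist, are unique, and satisfy
`(1/γ_K)·sup_t ‖x̄^{δ,fin}(t) − x̄⁰(t)‖ ≤ ‖x̄^{δ,fin} − x̄⁰‖_H ≤ λ`. -/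
theorem SOC_tightening_approximation
    {H : Type*} [NormedAddCommGroup H] [InnerProductSpace ℝ H] [CompleteSpace H]
    (N : ℕ) (T : ℝ) (hT : 0 < T)
    (ι : H → ℝ → EuclideanSpace ℝ (Fin N))
    (K : ℝ → ℝ → EuclideanSpace ℝ (Fin N) →L[ℝ] EuclideanSpace ℝ (Fin N))
    (k : ℝ → EuclideanSpace ℝ (Fin N) → H)
    (hker : ∀ t ∈ Set.Icc (0:ℝ) T, ∀ p, ι (k t p) = fun s => K s t p)
    (hrepro : ∀ (f : H), ∀ t ∈ Set.Icc (0:ℝ) T, ∀ p, ⟪f, k t p⟫ = ⟪p, ι f t⟫)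
    (hKunif : UniformContinuousOn (fun q : ℝ × ℝ => K q.1 q.2)
      (Set.Icc 0 T ×ˢ Set.Icc 0 T))
    (P : ℕ) (c : Fin P → ℝ → EuclideanSpace ℝ (Fin N)) (d : Fin P → ℝ → ℝ)
    (hc : ∀ i, ContinuousOn (c i) (Set.Icc 0 T))
    (hd : ∀ i, ContinuousOn (d i) (Set.Icc 0 T))
    (x₀ : EuclideanSpace ℝ (Fin N)) (hx₀ : ∀ i, ⟪c i 0, x₀⟫ < d i 0)
    (ε : Fin P → ℝ) (hεpos : ∀ i, 0 < ε i)
    (xeps : H) (hxeps0 : ι xeps 0 = x₀)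
    (hxepsfeas : ∀ t ∈ Set.Icc (0:ℝ) T, ∀ i, ⟪c i t, ι xeps t⟫ + ε i ≤ d i t)
    (g : EuclideanSpace ℝ (Fin N) → ℝ) (hg : Continuous g)
    (L : H → ℝ) (hL : ∀ x, L x = g (ι x T) + ‖x‖ ^ 2)
    (μ : ℝ) (hμ : 0 < μ)
    (hsc : ∀ x₁ x₂ : H, ∀ α : ℝ, α ∈ Set.Icc (0:ℝ) 1 →
      L (α • x₁ + (1 - α) • x₂) + α * (1 - α) * (μ / 2) * ‖x₁ - x₂‖ ^ 2 ≤
        α * L x₁ + (1 - α) * L x₂)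
    (γK : ℝ)
    (hγK : γK = sSup {a : ℝ | ∃ t ∈ Set.Icc (0:ℝ) T,
      ∃ p : EuclideanSpace ℝ (Fin N), ‖p‖ ≤ 1 ∧ a = Real.sqrt ⟪p, K t t p⟫}) :
    ∀ lam : ℝ, 0 < lam → ∃ δbar : ℝ, 0 < δbar ∧
      ∀ (N₀ : ℕ) (tm δm : Fin N₀ → ℝ),
        (∀ m, 0 < δm m) → (∀ m, tm m ∈ Set.Icc (0:ℝ) T) →
        (Set.Icc (0:ℝ) T ⊆ ⋃ m, Set.Icc (tm m - δm m) (tm m + δm m)) →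
        (∀ m, δm m ≤ δbar) →
        -- the feasible set with affine constraints
        let S0 : Set H := {x : H | ι x 0 = x₀ ∧
          ∀ t ∈ Set.Icc (0:ℝ) T, ∀ i, ⟪c i t, ι x t⟫ ≤ d i t}
        -- the feasible set with second-order cone constraints
        let Sd : Set H := {x : H | ι x 0 = x₀ ∧
          ∀ m, ∀ i,
            sSup ((fun s => ‖k (tm m) (c i (tm m)) - k s (c i s)‖) ''
              (Set.Icc (tm m - δm m) (tm m + δm m) ∩ Set.Icc 0 T)) * ‖x‖ +
              ⟪c i (tm m), ι x (tm m)⟫ ≤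
            sInf (d i '' (Set.Icc (tm m - δm m) (tm m + δm m) ∩ Set.Icc 0 T))}
        ∃ xbar0 : H, xbar0 ∈ S0 ∧ (∀ x ∈ S0, L xbar0 ≤ L x) ∧
          (∀ y ∈ S0, (∀ x ∈ S0, L y ≤ L x) → y = xbar0) ∧
        ∃ xbard : H, xbard ∈ Sd ∧ (∀ x ∈ Sd, L xbard ≤ L x) ∧
          (∀ y ∈ Sd, (∀ x ∈ Sd, L y ≤ L x) → y = xbard) ∧
          (1 / γK) * sSup ((fun t => ‖ι xbard t - ι xbar0 t‖) '' Set.Icc 0 T) ≤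
            ‖xbard - xbar0‖ ∧
          ‖xbard - xbar0‖ ≤ lam := by
  intro lam hlam
  have hIcc0 : (0:ℝ) ∈ Set.Icc (0:ℝ) T := ⟨le_refl 0, hT.le⟩
  have hIccT : T ∈ Set.Icc (0:ℝ) T := ⟨hT.le, le_refl T⟩
  -- linearity of evaluation
  have hadd : ∀ t ∈ Set.Icc (0:ℝ) T, ∀ x y : H, ι (x + y) t = ι x t + ι y t := by
    intro t ht x y
    apply ext_inner_left ℝ
    intro p
    rw [inner_add_right, ← hrepro x t ht p, ← hrepro y t ht p, ← hrepro (x + y) t ht p,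
      inner_add_left]
  have hsmul : ∀ t ∈ Set.Icc (0:ℝ) T, ∀ (a : ℝ) (x : H), ι (a • x) t = a • ι x t := by
    intro t ht a x
    apply ext_inner_left ℝ
    intro p
    rw [real_inner_smul_right, ← hrepro x t ht p, ← hrepro (a • x) t ht p,
      real_inner_smul_left]
  have hsub : ∀ t ∈ Set.Icc (0:ℝ) T, ∀ x y : H, ι (x - y) t = ι x t - ι y t := by
    intro t ht x y
    apply ext_inner_left ℝ
    intro p
    rw [inner_sub_right, ← hrepro x t ht p, ← hrepro y t ht p, ← hrepro (x - y) t ht p,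
      inner_sub_left]
  -- continuity of evaluations
  have hcont : ∀ t ∈ Set.Icc (0:ℝ) T, Continuous fun x : H => ι x t := by
    intro t ht
    have hco : ∀ (x : H) (j : Fin N), ι x t j = ⟪x, k t (EuclideanSpace.single j 1)⟫ := by
      intro x j
      have h1 := (hrepro x t ht (EuclideanSpace.single j (1:ℝ))).symm
      rw [EuclideanSpace.inner_single_left] at h1
      simpa using h1
    have heq : (fun x : H => ι x t)
        = fun x => (WithLp.equiv 2 (Fin N → ℝ)).symm
            (fun j => ⟪x, k t (EuclideanSpace.single j 1)⟫) := by
      funext x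
      ext j
      exact hco x j
    rw [heq]
    exact (PiLp.continuous_toLp _ _).comp
      (continuous_pi fun j => continuous_id.inner continuous_const)
  have hLcont : Continuous L := by
    have hLeq : L = fun x => g (ι x T) + ‖x‖ ^ 2 := funext hL
    rw [hLeq]
    exact (hg.comp (hcont T hIccT)).add (continuous_norm.pow 2)
  -- kernel diagonal bound
  have hKdiagC : ContinuousOn (fun t : ℝ => K t t) (Set.Icc 0 T) := by
    have h1 : ContinuousOn (fun q : ℝ × ℝ => K q.1 q.2) (Set.Icc 0 T ×ˢ Set.Icc 0 T) :=
      hKunif.continuousOn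
    have h2 : Continuous (fun t : ℝ => ((t, t) : ℝ × ℝ)) := continuous_id.prodMk continuous_id
    exact h1.comp h2.continuousOn (fun t ht => Set.mk_mem_prod ht ht)
  obtain ⟨CK, hCK⟩ := isCompact_Icc.exists_bound_of_continuousOn hKdiagC
  have hCK0 : 0 ≤ CK := le_trans (norm_nonneg _) (hCK 0 hIcc0)
  have hksq : ∀ t ∈ Set.Icc (0:ℝ) T, ∀ p, ‖k t p‖ ^ 2 = ⟪p, K t t p⟫ := by
    intro t ht p
    have h1 := hrepro (k t p) t ht p
    have h2 : ι (k t p) t = K t t p := by rw [hker t ht p]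
    rw [h2] at h1
    rw [← h1]
    exact (real_inner_self_eq_norm_sq _).symm
  have hsqrt : ∀ t ∈ Set.Icc (0:ℝ) T, ∀ p, Real.sqrt ⟪p, K t t p⟫ = ‖k t p‖ := by
    intro t ht p
    rw [← hksq t ht p, Real.sqrt_sq (norm_nonneg _)]
  have hAbdd : BddAbove {a : ℝ | ∃ t ∈ Set.Icc (0:ℝ) T,
      ∃ p : EuclideanSpace ℝ (Fin N), ‖p‖ ≤ 1 ∧ a = Real.sqrt ⟪p, K t t p⟫} := by
    refine ⟨Real.sqrt CK, ?_⟩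
    rintro a ⟨t, ht, p, hp, rfl⟩
    rw [hsqrt t ht p]
    have h1 : ‖k t p‖ ^ 2 ≤ CK := by
      rw [hksq t ht p]
      calc ⟪p, K t t p⟫ ≤ ‖p‖ * ‖K t t p‖ := real_inner_le_norm _ _
        _ ≤ 1 * (‖K t t‖ * ‖p‖) :=
            mul_le_mul hp ((K t t).le_opNorm p) (norm_nonneg _) zero_le_one
        _ ≤ 1 * (CK * 1) := by
            apply mul_le_mul_of_nonneg_left _ zero_le_one
            exact mul_le_mul (hCK t ht) hp (norm_nonneg _) hCK0
        _ = CK := by ring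
    calc ‖k t p‖ = Real.sqrt (‖k t p‖ ^ 2) := (Real.sqrt_sq (norm_nonneg _)).symm
      _ ≤ Real.sqrt CK := Real.sqrt_le_sqrt h1
  have hγK0 : 0 ≤ γK := by
    rw [hγK]
    apply Real.sSup_nonneg
    rintro a ⟨t, ht, p, hp, rfl⟩
    exact Real.sqrt_nonneg _
  have hkleγ : ∀ t ∈ Set.Icc (0:ℝ) T, ∀ p : EuclideanSpace ℝ (Fin N), ‖p‖ ≤ 1 →
      ‖k t p‖ ≤ γK := by
    intro t ht p hp
    rw [hγK]
    exact le_csSup hAbdd ⟨t, ht, p, hp, (hsqrt t ht p).symm⟩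
  have hevalnorm : ∀ t ∈ Set.Icc (0:ℝ) T, ∀ w : H, ‖ι w t‖ ≤ γK * ‖w‖ := by
    intro t ht w
    by_cases h0 : ι w t = 0
    · rw [h0, norm_zero]; exact mul_nonneg hγK0 (norm_nonneg _)
    · have hn : ‖ι w t‖ ≠ 0 := norm_ne_zero_iff.mpr h0
      have hpnorm : ‖(‖ι w t‖⁻¹ • ι w t : EuclideanSpace ℝ (Fin N))‖ = 1 :=
        norm_smul_inv_norm h0
      have h1 : ⟪(‖ι w t‖⁻¹ • ι w t : EuclideanSpace ℝ (Fin N)), ι w t⟫ = ‖ι w t‖ := by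
        rw [real_inner_smul_left, real_inner_self_eq_norm_sq, pow_two,
          inv_mul_cancel_left₀ hn]
      have h2 : ⟪w, k t (‖ι w t‖⁻¹ • ι w t)⟫ = ‖ι w t‖ := by
        rw [hrepro w t ht _, h1]
      calc ‖ι w t‖ = ⟪w, k t (‖ι w t‖⁻¹ • ι w t)⟫ := h2.symm
        _ ≤ ‖w‖ * ‖k t (‖ι w t‖⁻¹ • ι w t)‖ := real_inner_le_norm _ _
        _ ≤ ‖w‖ * γK :=
            mul_le_mul_of_nonneg_left (hkleγ t ht _ hpnorm.le) (norm_nonneg _)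
        _ = γK * ‖w‖ := mul_comm _ _
  -- the affine-constraint feasible set
  obtain ⟨S0', hS0'⟩ : ∃ s : Set H, s = {x : H | ι x 0 = x₀ ∧
      ∀ t ∈ Set.Icc (0:ℝ) T, ∀ i, ⟪c i t, ι x t⟫ ≤ d i t} := ⟨_, rfl⟩
  have hS0closed : IsClosed S0' := by
    rw [hS0']
    have heq : {x : H | ι x 0 = x₀ ∧ ∀ t ∈ Set.Icc (0:ℝ) T, ∀ i, ⟪c i t, ι x t⟫ ≤ d i t}
        = {x : H | ι x 0 = x₀} ∩ ⋂ (t : ℝ), ⋂ (_ : t ∈ Set.Icc (0:ℝ) T), ⋂ (i : Fin P),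
            {x : H | ⟪c i t, ι x t⟫ ≤ d i t} := by
      ext x
      simp [Set.mem_iInter]
    rw [heq]
    apply IsClosed.inter
    · exact isClosed_eq (hcont 0 hIcc0) continuous_const
    · exact isClosed_iInter fun t => isClosed_iInter fun ht => isClosed_iInter fun i =>
        isClosed_le (continuous_const.inner (hcont t ht)) continuous_const
  have hS0conv : Convex ℝ S0' := by
    rw [hS0']
    intro x hx y hy a b ha hb hab
    obtain ⟨hx0, hxc⟩ := hx
    obtain ⟨hy0, hyc⟩ := hy
    constructor
    · rw [hadd 0 hIcc0, hsmul 0 hIcc0, hsmul 0 hIcc0, hx0, hy0, ← add_smul, hab, one_smul]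
    · intro t ht i
      rw [hadd t ht, hsmul t ht, hsmul t ht, inner_add_right, real_inner_smul_right,
        real_inner_smul_right]
      have h1 := mul_le_mul_of_nonneg_left (hxc t ht i) ha
      have h2 := mul_le_mul_of_nonneg_left (hyc t ht i) hb
      have h3 : a * d i t + b * d i t = d i t := by
        have h4 := congrArg (· * d i t) hab
        simpa [add_mul] using h4
      linarith
  have hxepsS0 : xeps ∈ S0' := by
    rw [hS0']
    exact ⟨hxeps0, fun t ht i => by linarith [hxepsfeas t ht i, hεpos i]⟩
  have hbddL := sc_bddBelow' L hLcont μ hμ hsc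
  obtain ⟨x0b, hx0bS, hx0bmin, hx0bgrow⟩ :=
    sc_exists_min' L hLcont μ hμ hsc hbddL S0' hS0closed hS0conv ⟨xeps, hxepsS0⟩
  have hx0bS' := hx0bS
  rw [hS0'] at hx0bS'
  obtain ⟨hx0b0, hx0bc⟩ := hx0bS'
  -- choose θ
  have hLle : L x0b ≤ L xeps := hx0bmin xeps hxepsS0
  obtain ⟨θ, hθdef⟩ : ∃ θ : ℝ,
      θ = min (1/2 : ℝ) ((μ/4 * lam^2) / ((L xeps - L x0b) + 1)) := ⟨_, rfl⟩
  have hθpos : 0 < θ := by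
    rw [hθdef]
    exact lt_min one_half_pos (div_pos (mul_pos (by linarith) (pow_pos hlam 2)) (by linarith))
  have hθle1 : θ ≤ 1 := by
    rw [hθdef]
    exact le_trans (min_le_left _ _) (by norm_num)
  have hθkey : θ * (L xeps - L x0b) ≤ μ / 4 * lam ^ 2 := by
    have h1 : θ ≤ (μ/4 * lam^2) / ((L xeps - L x0b) + 1) := hθdef ▸ min_le_right _ _
    have h2 : θ * (L xeps - L x0b)
        ≤ (μ/4 * lam^2) / ((L xeps - L x0b) + 1) * (L xeps - L x0b) :=
      mul_le_mul_of_nonneg_right h1 (by linarith)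
    have hM : 0 ≤ μ/4 * lam^2 := le_of_lt (mul_pos (by linarith) (pow_pos hlam 2))
    have h3 : (μ/4 * lam^2) / ((L xeps - L x0b) + 1) * (L xeps - L x0b) ≤ μ/4 * lam^2 := by
      rw [div_mul_eq_mul_div, div_le_iff₀ (by linarith)]
      nlinarith [hM]
    linarith
  obtain ⟨R, hRdef⟩ : ∃ R : ℝ, R = ‖xeps‖ + ‖x0b‖ + 1 := ⟨_, rfl⟩
  have hRpos : 0 < R := by rw [hRdef]; positivity
  -- kernel section modulus of continuity
  have hkmod : ∀ i : Fin P, ∀ ρ : ℝ, 0 < ρ → ∃ δ, 0 < δ ∧ ∀ t ∈ Set.Icc (0:ℝ) T,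
      ∀ s ∈ Set.Icc (0:ℝ) T, |s - t| ≤ δ → ‖k t (c i t) - k s (c i s)‖ ≤ ρ := by
    intro i ρ hρ
    obtain ⟨G, hGdef⟩ : ∃ G : ℝ × ℝ → ℝ,
        G = fun q => (⟪c i q.1, K q.1 q.2 (c i q.2)⟫ : ℝ) := ⟨_, rfl⟩
    have hGval : ∀ s t : ℝ, G (s, t) = ⟪c i s, K s t (c i t)⟫ := by
      intro s t; rw [hGdef]
    have hGcont : ContinuousOn G (Set.Icc 0 T ×ˢ Set.Icc 0 T) := by
      rw [hGdef]
      apply ContinuousOn.inner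
      · exact (hc i).comp continuous_fst.continuousOn (fun q hq => hq.1)
      · exact ContinuousOn.clm_apply hKunif.continuousOn
          ((hc i).comp continuous_snd.continuousOn (fun q hq => hq.2))
    have hker2 : ∀ u ∈ Set.Icc (0:ℝ) T, ∀ v ∈ Set.Icc (0:ℝ) T,
        ⟪k u (c i u), k v (c i v)⟫ = G (v, u) := by
      intro u hu v hv
      rw [hGval]
      rw [hrepro (k u (c i u)) v hv (c i v)]
      have h2 : ι (k u (c i u)) v = K v u (c i u) := by rw [hker u hu (c i u)]
      rw [h2]
    have hWeq : ∀ s ∈ Set.Icc (0:ℝ) T, ∀ t ∈ Set.Icc (0:ℝ) T,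
        ‖k t (c i t) - k s (c i s)‖ ^ 2
          = G (t, t) - G (s, t) - G (t, s) + G (s, s) := by
      intro s hs t ht
      have h1 := norm_sub_sq_real (k t (c i t)) (k s (c i s))
      have h2 := hker2 t ht t ht
      have h3 := hker2 t ht s hs
      have h4 := hker2 s hs t ht
      have h5 := hker2 s hs s hs
      have h6 : ⟪k t (c i t), k s (c i s)⟫ = ⟪k s (c i s), k t (c i t)⟫ :=
        real_inner_comm _ _
      have h7 : ‖k t (c i t)‖ ^ 2 = ⟪k t (c i t), k t (c i t)⟫ :=
        (real_inner_self_eq_norm_sq _).symm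
      have h8 : ‖k s (c i s)‖ ^ 2 = ⟪k s (c i s), k s (c i s)⟫ :=
        (real_inner_self_eq_norm_sq _).symm
      linarith
    have hGuc := (isCompact_Icc.prod isCompact_Icc).uniformContinuousOn_of_continuous hGcont
    rw [Metric.uniformContinuousOn_iff] at hGuc
    obtain ⟨δ, hδ, hGδ⟩ := hGuc (ρ^2/3) (by positivity)
    refine ⟨δ/2, by positivity, fun t ht s hs hst => ?_⟩
    have hmemst : ((s, t) : ℝ × ℝ) ∈ Set.Icc (0:ℝ) T ×ˢ Set.Icc (0:ℝ) T := ⟨hs, ht⟩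
    have hmemts : ((t, s) : ℝ × ℝ) ∈ Set.Icc (0:ℝ) T ×ˢ Set.Icc (0:ℝ) T := ⟨ht, hs⟩
    have hmemss : ((s, s) : ℝ × ℝ) ∈ Set.Icc (0:ℝ) T ×ˢ Set.Icc (0:ℝ) T := ⟨hs, hs⟩
    have hmemtt : ((t, t) : ℝ × ℝ) ∈ Set.Icc (0:ℝ) T ×ˢ Set.Icc (0:ℝ) T := ⟨ht, ht⟩
    have hdst : dist ((s, t) : ℝ × ℝ) ((t, t) : ℝ × ℝ) < δ := by
      rw [Prod.dist_eq]
      apply max_lt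
      · rw [Real.dist_eq]; linarith [hst, hδ]
      · rw [dist_self]; linarith
    have hdts : dist ((t, s) : ℝ × ℝ) ((t, t) : ℝ × ℝ) < δ := by
      rw [Prod.dist_eq]
      apply max_lt
      · rw [dist_self]; linarith
      · rw [Real.dist_eq]; linarith [hst, hδ]
    have hdss : dist ((s, s) : ℝ × ℝ) ((t, t) : ℝ × ℝ) < δ := by
      rw [Prod.dist_eq]
      apply max_lt
      · rw [Real.dist_eq]; linarith [hst, hδ]
      · rw [Real.dist_eq]; linarith [hst, hδ]
    have hG1 := hGδ _ hmemst _ hmemtt hdst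
    have hG2 := hGδ _ hmemts _ hmemtt hdts
    have hG3 := hGδ _ hmemss _ hmemtt hdss
    rw [Real.dist_eq] at hG1 hG2 hG3
    have ha1 := abs_lt.mp hG1
    have ha2 := abs_lt.mp hG2
    have ha3 := abs_lt.mp hG3
    have hsq : ‖k t (c i t) - k s (c i s)‖ ^ 2 ≤ ρ ^ 2 := by
      rw [hWeq s hs t ht]
      have := ha1.1; have := ha1.2
      have := ha2.1; have := ha2.2
      have := ha3.1; have := ha3.2
      linarith [ha1.1, ha1.2, ha2.1, ha2.2, ha3.1, ha3.2]
    exact le_of_pow_le_pow_left₀ two_ne_zero hρ.le hsq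
  -- modulus for d
  have hdmod : ∀ i : Fin P, ∀ ρ : ℝ, 0 < ρ → ∃ δ, 0 < δ ∧ ∀ t ∈ Set.Icc (0:ℝ) T,
      ∀ s ∈ Set.Icc (0:ℝ) T, |s - t| ≤ δ → |d i s - d i t| ≤ ρ := by
    intro i ρ hρ
    have h := isCompact_Icc.uniformContinuousOn_of_continuous (hd i)
    rw [Metric.uniformContinuousOn_iff] at h
    obtain ⟨δ, hδ, hh⟩ := h ρ hρ
    refine ⟨δ/2, by positivity, fun t ht s hs hst => ?_⟩
    have := hh s hs t ht (by rw [Real.dist_eq]; linarith)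
    rw [Real.dist_eq] at this
    exact this.le
  -- choose δbar
  have hchoice : ∀ i : Fin P, ∃ δ, 0 < δ ∧
      (∀ t ∈ Set.Icc (0:ℝ) T, ∀ s ∈ Set.Icc (0:ℝ) T, |s - t| ≤ δ →
        ‖k t (c i t) - k s (c i s)‖ ≤ θ * ε i / (2 * R)) ∧
      (∀ t ∈ Set.Icc (0:ℝ) T, ∀ s ∈ Set.Icc (0:ℝ) T, |s - t| ≤ δ →
        |d i s - d i t| ≤ θ * ε i / 2) := by
    intro i
    obtain ⟨δ1, hδ1, h1⟩ := hkmod i (θ * ε i / (2 * R))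
      (div_pos (mul_pos hθpos (hεpos i)) (by linarith))
    obtain ⟨δ2, hδ2, h2⟩ := hdmod i (θ * ε i / 2)
      (div_pos (mul_pos hθpos (hεpos i)) two_pos)
    exact ⟨min δ1 δ2, lt_min hδ1 hδ2,
      fun t ht s hs hst => h1 t ht s hs (le_trans hst (min_le_left _ _)),
      fun t ht s hs hst => h2 t ht s hs (le_trans hst (min_le_right _ _))⟩
  choose δf hδfpos hδfk hδfd using hchoice
  obtain ⟨δbar, hδbarpos, hδbarle⟩ := exists_pos_forall_fin' δf hδfpos
  refine ⟨δbar, hδbarpos, ?_⟩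
  intro N₀ tm δm hδmpos htmmem hcover hδmle
  intro S0 Sd
  have hS0eq : S0 = S0' := by rw [hS0']
  have hSddef : Sd = {x : H | ι x 0 = x₀ ∧
      ∀ m, ∀ i,
        sSup ((fun s => ‖k (tm m) (c i (tm m)) - k s (c i s)‖) ''
          (Set.Icc (tm m - δm m) (tm m + δm m) ∩ Set.Icc 0 T)) * ‖x‖ +
          ⟪c i (tm m), ι x (tm m)⟫ ≤
        sInf (d i '' (Set.Icc (tm m - δm m) (tm m + δm m) ∩ Set.Icc 0 T))} := rfl
  -- facts about the intervals
  have htmIm : ∀ m, tm m ∈ Set.Icc (tm m - δm m) (tm m + δm m) ∩ Set.Icc (0:ℝ) T :=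
    fun m => ⟨⟨by linarith [hδmpos m], by linarith [hδmpos m]⟩, htmmem m⟩
  have hdistIm : ∀ (m : Fin N₀) (i : Fin P), ∀ s ∈ Set.Icc (tm m - δm m) (tm m + δm m) ∩ Set.Icc (0:ℝ) T,
      |s - tm m| ≤ δf i := by
    intro m i s hs
    have h1 : |s - tm m| ≤ δm m := abs_sub_le_iff.mpr ⟨by linarith [hs.1.2], by linarith [hs.1.1]⟩
    linarith [hδmle m, hδbarle i]
  -- bounds on the SOC coefficients
  have hηub : ∀ (m : Fin N₀) (i : Fin P),
      sSup ((fun s => ‖k (tm m) (c i (tm m)) - k s (c i s)‖) ''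
        (Set.Icc (tm m - δm m) (tm m + δm m) ∩ Set.Icc 0 T)) ≤ θ * ε i / (2 * R) := by
    intro m i
    apply Real.sSup_le
    · rintro a ⟨s, hsIm, rfl⟩
      exact hδfk i (tm m) (htmmem m) s hsIm.2 (hdistIm m i s hsIm)
    · exact le_of_lt (div_pos (mul_pos hθpos (hεpos i)) (by linarith))
  have hηnn : ∀ (m : Fin N₀) (i : Fin P),
      0 ≤ sSup ((fun s => ‖k (tm m) (c i (tm m)) - k s (c i s)‖) ''
        (Set.Icc (tm m - δm m) (tm m + δm m) ∩ Set.Icc 0 T)) := by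
    intro m i
    apply Real.sSup_nonneg
    rintro a ⟨s, hsIm, rfl⟩
    exact norm_nonneg _
  have hηmem : ∀ (m : Fin N₀) (i : Fin P),
      ∀ s ∈ Set.Icc (tm m - δm m) (tm m + δm m) ∩ Set.Icc (0:ℝ) T,
      ‖k (tm m) (c i (tm m)) - k s (c i s)‖ ≤
        sSup ((fun s => ‖k (tm m) (c i (tm m)) - k s (c i s)‖) ''
          (Set.Icc (tm m - δm m) (tm m + δm m) ∩ Set.Icc 0 T)) := by
    intro m i s hs
    apply le_csSup
    · refine ⟨θ * ε i / (2 * R), ?_⟩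
      rintro a ⟨s', hs', rfl⟩
      exact hδfk i (tm m) (htmmem m) s' hs'.2 (hdistIm m i s' hs')
    · exact ⟨s, hs, rfl⟩
  have hDlb : ∀ (m : Fin N₀) (i : Fin P),
      d i (tm m) - θ * ε i / 2 ≤
        sInf (d i '' (Set.Icc (tm m - δm m) (tm m + δm m) ∩ Set.Icc 0 T)) := by
    intro m i
    apply le_csInf (Set.Nonempty.image _ ⟨tm m, htmIm m⟩)
    rintro b ⟨s, hsIm, rfl⟩
    have h1 := hδfd i (tm m) (htmmem m) s hsIm.2 (hdistIm m i s hsIm)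
    have h2 := abs_le.mp h1
    linarith [h2.1]
  have hDub : ∀ (m : Fin N₀) (i : Fin P),
      ∀ s ∈ Set.Icc (tm m - δm m) (tm m + δm m) ∩ Set.Icc (0:ℝ) T,
      sInf (d i '' (Set.Icc (tm m - δm m) (tm m + δm m) ∩ Set.Icc 0 T)) ≤ d i s := by
    intro m i s hs
    apply csInf_le
    · refine ⟨d i (tm m) - θ * ε i / 2, ?_⟩
      rintro b ⟨s', hs', rfl⟩
      have h1 := hδfd i (tm m) (htmmem m) s' hs'.2 (hdistIm m i s' hs')
      have h2 := abs_le.mp h1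
      linarith [h2.1]
    · exact ⟨s, hs, rfl⟩
  -- the interpolating point z
  obtain ⟨z, hzdef⟩ : ∃ z : H, z = θ • xeps + (1 - θ) • x0b := ⟨_, rfl⟩
  have hznorm : ‖z‖ ≤ R := by
    rw [hzdef]
    calc ‖θ • xeps + (1 - θ) • x0b‖ ≤ ‖θ • xeps‖ + ‖(1 - θ) • x0b‖ := norm_add_le _ _
      _ = θ * ‖xeps‖ + (1 - θ) * ‖x0b‖ := by
          rw [norm_smul, norm_smul, Real.norm_eq_abs, Real.norm_eq_abs,
            abs_of_pos hθpos, abs_of_nonneg (by linarith : (0:ℝ) ≤ 1 - θ)]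
      _ ≤ R := by
          rw [hRdef]
          have h1 := mul_le_mul_of_nonneg_right hθle1 (norm_nonneg xeps)
          have h2 := mul_le_mul_of_nonneg_right (by linarith : 1 - θ ≤ 1) (norm_nonneg x0b)
          nlinarith [h1, h2]
  have hz0 : ι z 0 = x₀ := by
    rw [hzdef, hadd 0 hIcc0, hsmul 0 hIcc0, hsmul 0 hIcc0, hxeps0, hx0b0, ← add_smul]
    norm_num
  have hzSd : z ∈ Sd := by
    rw [hSddef]
    refine ⟨hz0, fun m i => ?_⟩
    have hη1 := hηub m i
    have hη0 := hηnn m i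
    have h2 : ⟪c i (tm m), ι z (tm m)⟫ ≤ d i (tm m) - θ * ε i := by
      rw [hzdef, hadd (tm m) (htmmem m), hsmul (tm m) (htmmem m), hsmul (tm m) (htmmem m),
        inner_add_right, real_inner_smul_right, real_inner_smul_right]
      have ha := hxepsfeas (tm m) (htmmem m) i
      have hb := hx0bc (tm m) (htmmem m) i
      have hc1 := mul_le_mul_of_nonneg_left
        (show ⟪c i (tm m), ι xeps (tm m)⟫ ≤ d i (tm m) - ε i by linarith) hθpos.le
      have hc2 := mul_le_mul_of_nonneg_left hb (by linarith : (0:ℝ) ≤ 1 - θ)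
      nlinarith [hc1, hc2]
    have h3 : sSup ((fun s => ‖k (tm m) (c i (tm m)) - k s (c i s)‖) ''
        (Set.Icc (tm m - δm m) (tm m + δm m) ∩ Set.Icc 0 T)) * ‖z‖ ≤ θ * ε i / 2 := by
      calc sSup ((fun s => ‖k (tm m) (c i (tm m)) - k s (c i s)‖) ''
          (Set.Icc (tm m - δm m) (tm m + δm m) ∩ Set.Icc 0 T)) * ‖z‖
          ≤ (θ * ε i / (2 * R)) * R := by
            apply mul_le_mul hη1 hznorm (norm_nonneg _)
            exact le_of_lt (div_pos (mul_pos hθpos (hεpos i)) (by linarith))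
        _ = θ * ε i / 2 := by
            field_simp
    have h4 := hDlb m i
    linarith
  -- Sd is closed and convex
  have hSdclosed : IsClosed Sd := by
    rw [hSddef]
    have heq : {x : H | ι x 0 = x₀ ∧
        ∀ m, ∀ i,
          sSup ((fun s => ‖k (tm m) (c i (tm m)) - k s (c i s)‖) ''
            (Set.Icc (tm m - δm m) (tm m + δm m) ∩ Set.Icc 0 T)) * ‖x‖ +
            ⟪c i (tm m), ι x (tm m)⟫ ≤
          sInf (d i '' (Set.Icc (tm m - δm m) (tm m + δm m) ∩ Set.Icc 0 T))}
        = {x : H | ι x 0 = x₀} ∩ ⋂ (m : Fin N₀), ⋂ (i : Fin P),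
            {x : H | sSup ((fun s => ‖k (tm m) (c i (tm m)) - k s (c i s)‖) ''
              (Set.Icc (tm m - δm m) (tm m + δm m) ∩ Set.Icc 0 T)) * ‖x‖ +
              ⟪c i (tm m), ι x (tm m)⟫ ≤
            sInf (d i '' (Set.Icc (tm m - δm m) (tm m + δm m) ∩ Set.Icc 0 T))} := by
      ext x
      simp [Set.mem_iInter]
    rw [heq]
    apply IsClosed.inter
    · exact isClosed_eq (hcont 0 hIcc0) continuous_const
    · exact isClosed_iInter fun m => isClosed_iInter fun i =>
        isClosed_le ((continuous_const.mul continuous_norm).add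
          (continuous_const.inner (hcont (tm m) (htmmem m)))) continuous_const
  have hSdconv : Convex ℝ Sd := by
    rw [hSddef]
    intro x hx y hy a b ha hb hab
    obtain ⟨hx0, hxc⟩ := hx
    obtain ⟨hy0, hyc⟩ := hy
    constructor
    · rw [hadd 0 hIcc0, hsmul 0 hIcc0, hsmul 0 hIcc0, hx0, hy0, ← add_smul, hab, one_smul]
    · intro m i
      have h1 := hxc m i
      have h2 := hyc m i
      have hnorm : ‖a • x + b • y‖ ≤ a * ‖x‖ + b * ‖y‖ := by
        calc ‖a • x + b • y‖ ≤ ‖a • x‖ + ‖b • y‖ := norm_add_le _ _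
          _ = a * ‖x‖ + b * ‖y‖ := by
              rw [norm_smul, norm_smul, Real.norm_eq_abs, Real.norm_eq_abs,
                abs_of_nonneg ha, abs_of_nonneg hb]
      rw [hadd (tm m) (htmmem m), hsmul (tm m) (htmmem m), hsmul (tm m) (htmmem m),
        inner_add_right, real_inner_smul_right, real_inner_smul_right]
      have hη0 := hηnn m i
      have hmul := mul_le_mul_of_nonneg_left hnorm hη0
      have hc1 := mul_le_mul_of_nonneg_left h1 ha
      have hc2 := mul_le_mul_of_nonneg_left h2 hb
      have hD : a * sInf (d i '' (Set.Icc (tm m - δm m) (tm m + δm m) ∩ Set.Icc 0 T))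
          + b * sInf (d i '' (Set.Icc (tm m - δm m) (tm m + δm m) ∩ Set.Icc 0 T))
          = sInf (d i '' (Set.Icc (tm m - δm m) (tm m + δm m) ∩ Set.Icc 0 T)) := by
        have h4 := congrArg
          (· * sInf (d i '' (Set.Icc (tm m - δm m) (tm m + δm m) ∩ Set.Icc 0 T))) hab
        simpa [add_mul] using h4
      nlinarith [hmul, hc1, hc2, hD]
  -- minimizer over Sd
  obtain ⟨xdb, hxdbS, hxdbmin, hxdbgrow⟩ :=
    sc_exists_min' L hLcont μ hμ hsc hbddL Sd hSdclosed hSdconv ⟨z, hzSd⟩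
  -- Sd ⊆ S0'
  have hSdsub : ∀ x, x ∈ Sd → x ∈ S0' := by
    intro x hx
    rw [hSddef] at hx
    obtain ⟨hx0, hxc⟩ := hx
    rw [hS0']
    refine ⟨hx0, fun t ht i => ?_⟩
    obtain ⟨m, hm⟩ := Set.mem_iUnion.mp (hcover ht)
    have htIm : t ∈ Set.Icc (tm m - δm m) (tm m + δm m) ∩ Set.Icc (0:ℝ) T := ⟨hm, ht⟩
    have e1 : ⟪c i t, ι x t⟫ = ⟪x, k t (c i t)⟫ := (hrepro x t ht (c i t)).symm
    have e2 : ⟪c i (tm m), ι x (tm m)⟫ = ⟪x, k (tm m) (c i (tm m))⟫ :=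
      (hrepro x (tm m) (htmmem m) (c i (tm m))).symm
    have e3 : ⟪x, k t (c i t) - k (tm m) (c i (tm m))⟫
        = ⟪x, k t (c i t)⟫ - ⟪x, k (tm m) (c i (tm m))⟫ := inner_sub_right _ _ _
    have e4 : ⟪x, k t (c i t) - k (tm m) (c i (tm m))⟫
        ≤ ‖x‖ * ‖k t (c i t) - k (tm m) (c i (tm m))‖ := real_inner_le_norm _ _
    have e5 := hηmem m i t htIm
    have e6 : ‖k t (c i t) - k (tm m) (c i (tm m))‖
        = ‖k (tm m) (c i (tm m)) - k t (c i t)‖ := norm_sub_rev _ _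
    have e7 := hxc m i
    have e8 := hDub m i t htIm
    have e9 := mul_le_mul_of_nonneg_left (e6 ▸ e5) (norm_nonneg x)
    nlinarith [e1, e2, e3, e4, e7, e8, e9]
  -- quantitative bound
  have hxdbS0 : xdb ∈ S0' := hSdsub xdb hxdbS
  have hgrow := hx0bgrow xdb hxdbS0
  have hLz : L z ≤ θ * L xeps + (1 - θ) * L x0b := by
    have h := hsc xeps x0b θ ⟨hθpos.le, hθle1⟩
    have hnn : 0 ≤ θ * (1 - θ) * (μ / 2) * ‖xeps - x0b‖ ^ 2 :=
      mul_nonneg (mul_nonneg (mul_nonneg hθpos.le (by linarith)) (by linarith))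
        (sq_nonneg _)
    rw [hzdef]
    linarith
  have hLxdb : L xdb ≤ L z := hxdbmin z hzSd
  have hnormle : ‖xdb - x0b‖ ≤ lam := by
    have h1 : L xdb - L x0b ≤ θ * (L xeps - L x0b) := by nlinarith [hLz, hLxdb]
    have h2 : μ / 4 * ‖xdb - x0b‖ ^ 2 ≤ μ / 4 * lam ^ 2 := by linarith [hgrow, hθkey]
    have h3 : ‖xdb - x0b‖ ^ 2 ≤ lam ^ 2 :=
      le_of_mul_le_mul_left (by linarith [h2]) (by linarith : (0:ℝ) < μ / 4)
    exact le_of_pow_le_pow_left₀ two_ne_zero hlam.le h3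
  -- the sup bound
  have hsuple : sSup ((fun t => ‖ι xdb t - ι x0b t‖) '' Set.Icc 0 T)
      ≤ γK * ‖xdb - x0b‖ := by
    apply Real.sSup_le
    · rintro a ⟨t, ht, rfl⟩
      show ‖ι xdb t - ι x0b t‖ ≤ γK * ‖xdb - x0b‖
      have h1 : ι xdb t - ι x0b t = ι (xdb - x0b) t := (hsub t ht xdb x0b).symm
      rw [h1]
      exact hevalnorm t ht (xdb - x0b)
    · exact mul_nonneg hγK0 (norm_nonneg _)
  have hfrac : (1 / γK) * sSup ((fun t => ‖ι xdb t - ι x0b t‖) '' Set.Icc 0 T)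
      ≤ ‖xdb - x0b‖ := by
    rcases eq_or_lt_of_le hγK0 with heq | hpos
    · rw [← heq, div_zero, zero_mul]
      exact norm_nonneg _
    · have h1 : 0 ≤ 1 / γK := le_of_lt (div_pos one_pos hpos)
      calc (1 / γK) * sSup ((fun t => ‖ι xdb t - ι x0b t‖) '' Set.Icc 0 T)
          ≤ (1 / γK) * (γK * ‖xdb - x0b‖) := mul_le_mul_of_nonneg_left hsuple h1
        _ = ‖xdb - x0b‖ := by
            field_simp
  -- assemble
  have hx0bSmem : x0b ∈ S0 := by rw [hS0eq]; exact hx0bS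
  refine ⟨x0b, hx0bSmem, ?_, ?_, xdb, hxdbS, hxdbmin, ?_, hfrac, hnormle⟩
  · intro x hx
    rw [hS0eq] at hx
    exact hx0bmin x hx
  · intro y hy hymin
    rw [hS0eq] at hy
    have h1 := hx0bgrow y hy
    have h2 := hymin x0b hx0bSmem
    have h3 : ‖y - x0b‖ ^ 2 ≤ 0 := by nlinarith [h1, h2, hμ]
    have h4 : ‖y - x0b‖ ^ 2 = 0 := le_antisymm h3 (sq_nonneg _)
    have h5 : ‖y - x0b‖ = 0 := by
      exact pow_eq_zero_iff two_ne_zero |>.mp h4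
    exact sub_eq_zero.mp (norm_eq_zero.mp h5)
  · intro y hy hymin
    have h1 := hxdbgrow y hy
    have h2 := hymin xdb hxdbS
    have h3 : ‖y - xdb‖ ^ 2 ≤ 0 := by nlinarith [h1, h2, hμ]
    have h4 : ‖y - xdb‖ ^ 2 = 0 := le_antisymm h3 (sq_nonneg _)
    have h5 : ‖y - xdb‖ = 0 := by
      exact pow_eq_zero_iff two_ne_zero |>.mp h4
    exact sub_eq_zero.mp (norm_eq_zero.mp h5)
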